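/- arXiv:2012.09651 — 3 statements merged into one kernel-verified Lean document; each statement's English description precedes it below -/
import Mathlib

section
/- For every integer σ with σ ≠ −1 there exists a constant c(σ) > 0 such that for all b, w₁, w₂ ∈ ℂ with w₁ ≠ b and w₂ ≠ b, ∫₀¹ |w₁ + t(w₂ − w₁) − b|^{σ} dt ≥ c(σ) · |w₁ − b|^{σ/2} |w₂ − b|^{σ/2}, where the left-hand side is interpreted as a value in [0, ∞] (it may be infinite when σ < 0 and b lies on the segment). Equivalently, with the line-integral notation ∫_{w₁}^{w₂} f(y) dy := (w₂ − w₁) ∫₀¹ f(w₁ + t(w₂ − w₁)) dt, one has |∫_{w₁}^{w₂} |y − b|^{σ} dy| ≥ c(σ) |w₁ − b|^{σ/2} |w₂ − b|^{σ/2} |w₂ − w₁|. -/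
open MeasureTheory
open scoped ENNReal

noncomputable section

private lemma seg_symm_aux (g : ℝ → ℝ≥0∞) :
    ∫⁻ t in Set.Icc (0:ℝ) 1, g (1 - t) = ∫⁻ t in Set.Icc (0:ℝ) 1, g t := by
  have hmp : MeasurePreserving (fun t : ℝ => 1 - t) volume volume :=
    Measure.measurePreserving_sub_left volume 1
  have hemb : MeasurableEmbedding (fun t : ℝ => 1 - t) :=
    (MeasurableEquiv.subLeft (1:ℝ)).measurableEmbedding
  have hpre : (fun t : ℝ => 1 - t) ⁻¹' Set.Icc (0:ℝ) 1 = Set.Icc (0:ℝ) 1 := by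
    ext x
    simp only [Set.mem_preimage, Set.mem_Icc]
    constructor <;> rintro ⟨h1, h2⟩ <;> constructor <;> linarith
  calc ∫⁻ t in Set.Icc (0:ℝ) 1, g (1 - t)
      = ∫⁻ t in (fun t : ℝ => 1 - t) ⁻¹' Set.Icc (0:ℝ) 1, g (1 - t) := by rw [hpre]
    _ = ∫⁻ t in Set.Icc (0:ℝ) 1, g t :=
        hmp.setLIntegral_comp_preimage_emb hemb g _

private lemma seg_lb (b w₁ w₂ : ℂ) (t : ℝ) (ht2 : t ≤ 1) :
    ‖w₂ - b‖ - (1 - t) * (‖w₂ - b‖ + ‖w₁ - b‖) ≤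
      ‖w₁ + t • (w₂ - w₁) - b‖ := by
  have hid : w₁ + t • (w₂ - w₁) - b = (w₂ - b) - (1 - t) • (w₂ - w₁) := by module
  rw [hid]
  have h1 : ‖w₂ - b‖ - ‖(1 - t) • (w₂ - w₁)‖ ≤ ‖(w₂ - b) - (1 - t) • (w₂ - w₁)‖ :=
    norm_sub_norm_le _ _
  have h2 : ‖(1 - t) • (w₂ - w₁)‖ = (1 - t) * ‖w₂ - w₁‖ := by
    rw [norm_smul, Real.norm_eq_abs, abs_of_nonneg (by linarith)]
  have h3 : ‖w₂ - w₁‖ ≤ ‖w₂ - b‖ + ‖w₁ - b‖ := by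
    calc ‖w₂ - w₁‖ = ‖(w₂ - b) - (w₁ - b)‖ := by ring_nf
      _ ≤ ‖w₂ - b‖ + ‖w₁ - b‖ := norm_sub_le _ _
  nlinarith [norm_nonneg (w₂ - w₁)]

private lemma seg_ub (b w₁ w₂ : ℂ) (t : ℝ) (ht1 : (0:ℝ) ≤ t) (ht2 : t ≤ 1) :
    ‖w₁ + t • (w₂ - w₁) - b‖ ≤
      (1 - t) * ‖w₁ - b‖ + t * ‖w₂ - b‖ := by
  have hid : w₁ + t • (w₂ - w₁) - b = (1 - t) • (w₁ - b) + t • (w₂ - b) := by module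
  rw [hid]
  calc ‖(1 - t) • (w₁ - b) + t • (w₂ - b)‖ ≤ ‖(1 - t) • (w₁ - b)‖ + ‖t • (w₂ - b)‖ :=
        norm_add_le _ _
    _ = (1 - t) * ‖w₁ - b‖ + t * ‖w₂ - b‖ := by
        rw [norm_smul, norm_smul, Real.norm_eq_abs, Real.norm_eq_abs,
          abs_of_nonneg (by linarith : (0:ℝ) ≤ 1 - t), abs_of_nonneg ht1]

/-- lower bound an integral over `Icc 0 1` by a constant on a subinterval -/
private lemma seg_step {g : ℝ → ℝ≥0∞} {I : Set ℝ} (hI : MeasurableSet I)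
    (hsub : I ⊆ Set.Icc (0:ℝ) 1) {C : ℝ≥0∞}
    (h : ∀ᵐ t ∂(volume.restrict I), C ≤ g t) :
    C * volume I ≤ ∫⁻ t in Set.Icc (0:ℝ) 1, g t := by
  calc C * volume I = ∫⁻ _ in I, C := (setLIntegral_const I C).symm
    _ ≤ ∫⁻ t in I, g t := lintegral_mono_ae h
    _ ≤ ∫⁻ t in Set.Icc (0:ℝ) 1, g t := lintegral_mono_set hsub

private lemma ordered_case (σ : ℤ) (hσ : σ ≠ -1) :
    ∃ c : ℝ, 0 < c ∧
      ∀ b w₁ w₂ : ℂ, w₁ ≠ b → w₂ ≠ b → ‖w₁ - b‖ ≤ ‖w₂ - b‖ →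
        ENNReal.ofReal (c * ‖w₁ - b‖ ^ ((σ : ℝ) / 2) *
            ‖w₂ - b‖ ^ ((σ : ℝ) / 2)) ≤
          ∫⁻ t in Set.Icc (0 : ℝ) 1,
            ENNReal.ofReal (‖w₁ + t • (w₂ - w₁) - b‖ ^ σ) := by
  rcases le_or_gt 0 σ with hσ0 | hσneg
  · -- nonnegative exponent
    lift σ to ℕ using hσ0 with n
    refine ⟨(1/4) * (1/2) ^ n, by positivity, ?_⟩
    intro b w₁ w₂ h1 h2 hAB
    have hA : 0 < ‖w₁ - b‖ := norm_pos_iff.mpr (sub_ne_zero.mpr h1)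
    have hB : 0 < ‖w₂ - b‖ := norm_pos_iff.mpr (sub_ne_zero.mpr h2)
    set A := ‖w₁ - b‖
    set B := ‖w₂ - b‖
    have key : ∀ t ∈ Set.Icc (3/4 : ℝ) 1,
        ENNReal.ofReal ((B/2) ^ n) ≤
          ENNReal.ofReal (‖w₁ + t • (w₂ - w₁) - b‖ ^ (n:ℤ)) := by
      intro t ht
      obtain ⟨ht1, ht2⟩ := ht
      have hlb := seg_lb b w₁ w₂ t ht2
      have hf : B / 2 ≤ ‖w₁ + t • (w₂ - w₁) - b‖ := by nlinarith
      apply ENNReal.ofReal_le_ofReal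
      rw [zpow_natCast]
      exact pow_le_pow_left₀ (by positivity) hf n
    have step := seg_step (I := Set.Icc (3/4:ℝ) 1) measurableSet_Icc
      (Set.Icc_subset_Icc (by norm_num) le_rfl)
      (C := ENNReal.ofReal ((B/2) ^ n))
      ((ae_restrict_mem measurableSet_Icc).mono key)
    have hvol : volume (Set.Icc (3/4:ℝ) 1) = ENNReal.ofReal (1/4) := by
      rw [Real.volume_Icc]; norm_num
    rw [hvol, ← ENNReal.ofReal_mul (by positivity)] at step
    refine le_trans (ENNReal.ofReal_le_ofReal ?_) step
    -- real inequality
    have hcast : ((n : ℤ) : ℝ) = (n : ℝ) := by push_cast; ring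
    rw [hcast]
    have he : (0:ℝ) ≤ (n : ℝ) / 2 := by positivity
    have h1' : A ^ ((n:ℝ)/2) ≤ B ^ ((n:ℝ)/2) := Real.rpow_le_rpow hA.le hAB he
    have h2' : B ^ ((n:ℝ)/2) * B ^ ((n:ℝ)/2) = B ^ n := by
      rw [← Real.rpow_natCast B n, ← Real.rpow_add hB]
      congr 1
      ring
    have h3' : (0:ℝ) ≤ B ^ ((n:ℝ)/2) := Real.rpow_nonneg hB.le _
    calc (1/4) * (1/2:ℝ) ^ n * A ^ ((n:ℝ)/2) * B ^ ((n:ℝ)/2)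
        ≤ (1/4) * (1/2:ℝ) ^ n * B ^ ((n:ℝ)/2) * B ^ ((n:ℝ)/2) := by
          have h0 : (0:ℝ) ≤ (1/4) * (1/2:ℝ) ^ n := by positivity
          exact mul_le_mul_of_nonneg_right (mul_le_mul_of_nonneg_left h1' h0) h3'
      _ = (1/4) * (1/2:ℝ) ^ n * B ^ n := by rw [mul_assoc, h2']
      _ = (B/2) ^ n * (1/4) := by rw [div_pow, div_pow, one_pow]; ring
  · -- negative exponent, σ ≤ -2
    have hσ2 : σ ≤ -2 := by omega
    have hs2 : (σ : ℝ) ≤ -2 := by exact_mod_cast hσ2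
    refine ⟨(2:ℝ) ^ ((σ:ℝ) - 1), Real.rpow_pos_of_pos two_pos _, ?_⟩
    intro b w₁ w₂ h1 h2 hAB
    have hA : 0 < ‖w₁ - b‖ := norm_pos_iff.mpr (sub_ne_zero.mpr h1)
    have hB : 0 < ‖w₂ - b‖ := norm_pos_iff.mpr (sub_ne_zero.mpr h2)
    set A := ‖w₁ - b‖ with hAdef
    set B := ‖w₂ - b‖ with hBdef
    set s : ℝ := (σ : ℝ) with hsdef
    -- the zero set has measure zero
    have hZ : volume {t : ℝ | w₁ + t • (w₂ - w₁) - b = 0} = 0 := by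
      by_cases hw : w₂ - w₁ = 0
      · have : {t : ℝ | w₁ + t • (w₂ - w₁) - b = 0} = ∅ := by
          ext t
          simp only [Set.mem_setOf_eq, Set.mem_empty_iff_false, iff_false, hw, smul_zero,
            add_zero]
          exact sub_ne_zero.mpr h1
        rw [this, measure_empty]
      · apply Set.Subsingleton.measure_zero
        intro t₁ ht₁ t₂ ht₂
        simp only [Set.mem_setOf_eq] at ht₁ ht₂
        have : (t₁ - t₂) • (w₂ - w₁) = 0 := by
          have := sub_eq_zero.mpr (ht₁.trans ht₂.symm)
          rw [sub_smul]
          have h' : w₁ + t₁ • (w₂ - w₁) - b = w₁ + t₂ • (w₂ - w₁) - b := ht₁.trans ht₂.symm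
          have : t₁ • (w₂ - w₁) = t₂ • (w₂ - w₁) := by
            have := h'
            abel_nf at this ⊢
            linear_combination (norm := module) this
          rw [this, sub_self]
        rcases smul_eq_zero.mp this with h | h
        · have : t₁ - t₂ = 0 := by exact_mod_cast h
          linarith [this]
        · exact absurd h hw
    have hZae : ∀ᵐ t : ℝ ∂volume, w₁ + t • (w₂ - w₁) - b ≠ 0 := by
      rw [ae_iff]
      simpa using hZ
    -- pointwise bound on I = Icc 0 (A/(2B))
    have hsubI : Set.Icc (0:ℝ) (A/(2*B)) ⊆ Set.Icc (0:ℝ) 1 := by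
      apply Set.Icc_subset_Icc le_rfl
      rw [div_le_one (by positivity)]
      nlinarith
    have key : ∀ᵐ t ∂(volume.restrict (Set.Icc (0:ℝ) (A/(2*B)))),
        ENNReal.ofReal ((2*A) ^ σ) ≤
          ENNReal.ofReal (‖w₁ + t • (w₂ - w₁) - b‖ ^ σ) := by
      filter_upwards [ae_restrict_mem measurableSet_Icc, ae_restrict_of_ae hZae] with t ht hnz
      obtain ⟨ht1, ht2⟩ := ht
      have ht2' : t ≤ 1 := le_trans ht2 (by
        rw [div_le_one (by positivity)]; nlinarith)
      have hub := seg_ub b w₁ w₂ t ht1 ht2'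
      have hfpos : 0 < ‖w₁ + t • (w₂ - w₁) - b‖ := norm_pos_iff.mpr hnz
      have hfle : ‖w₁ + t • (w₂ - w₁) - b‖ ≤ 2 * A := by
        have htB : t * B ≤ A / 2 := by
          calc t * B ≤ (A/(2*B)) * B := by nlinarith
            _ = A / 2 := by field_simp
        nlinarith
      apply ENNReal.ofReal_le_ofReal
      rw [← Real.rpow_intCast (2*A) σ, ← Real.rpow_intCast _ σ]
      exact Real.rpow_le_rpow_of_nonpos hfpos hfle (by rw [← hsdef]; linarith)
    have step := seg_step measurableSet_Icc hsubI key
    have hvol : volume (Set.Icc (0:ℝ) (A/(2*B))) = ENNReal.ofReal (A/(2*B)) := by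
      rw [Real.volume_Icc]; norm_num
    rw [hvol, ← ENNReal.ofReal_mul (by positivity)] at step
    refine le_trans (ENNReal.ofReal_le_ofReal ?_) step
    -- real inequality: 2^(s-1) * A^(s/2) * B^(s/2) ≤ (2A)^σ * (A/(2B))
    rw [← Real.rpow_intCast (2*A) σ, ← hsdef]
    have hkey : B ^ (s/2 + 1) ≤ A ^ (s/2 + 1) :=
      Real.rpow_le_rpow_of_nonpos hA hAB (by linarith)
    have hBe : B ^ (s/2) = B ^ (s/2 + 1) * B⁻¹ := by
      rw [← Real.rpow_neg_one B, ← Real.rpow_add hB]; norm_num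
    have hfin : (2*A) ^ s * (A/(2*B)) = 2 ^ (s-1) * (A ^ (s + 1) * B⁻¹) := by
      rw [Real.mul_rpow (by norm_num) hA.le, Real.rpow_sub two_pos,
        Real.rpow_add hA, Real.rpow_one, Real.rpow_one]
      field_simp
    rw [hfin]
    have h2' : A ^ (s/2) * B ^ (s/2) ≤ A ^ (s+1) * B⁻¹ := by
      rw [hBe, ← mul_assoc]
      have hAe : A ^ (s+1) = A ^ (s/2) * A ^ (s/2 + 1) := by
        rw [← Real.rpow_add hA]; ring_nf
      rw [hAe]
      have hBinv : (0:ℝ) ≤ B⁻¹ := by positivity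
      have hApow : (0:ℝ) ≤ A ^ (s/2) := Real.rpow_nonneg hA.le _
      exact mul_le_mul_of_nonneg_right (mul_le_mul_of_nonneg_left hkey hApow) hBinv
    have hcpos : (0:ℝ) < 2 ^ (s-1) := Real.rpow_pos_of_pos two_pos _
    calc (2:ℝ) ^ (s-1) * A ^ (s/2) * B ^ (s/2) = 2 ^ (s-1) * (A ^ (s/2) * B ^ (s/2)) := by ring
      _ ≤ 2 ^ (s-1) * (A ^ (s+1) * B⁻¹) := by
          exact mul_le_mul_of_nonneg_left h2' hcpos.le

/-- for every integer `σ ≠ -1`,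
`∫₀¹ |w₁ + t(w₂-w₁) - b|^σ dt ≳ |w₁-b|^{σ/2} |w₂-b|^{σ/2}`, the left side interpreted as a
value in `[0,∞]`. -/
theorem segment_power_integral_lower_bound (σ : ℤ) (hσ : σ ≠ -1) :
    ∃ c : ℝ, 0 < c ∧
      ∀ b w₁ w₂ : ℂ, w₁ ≠ b → w₂ ≠ b →
        ENNReal.ofReal (c * ‖w₁ - b‖ ^ ((σ : ℝ) / 2) *
            ‖w₂ - b‖ ^ ((σ : ℝ) / 2)) ≤
          ∫⁻ t in Set.Icc (0 : ℝ) 1,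
            ENNReal.ofReal (‖w₁ + t • (w₂ - w₁) - b‖ ^ σ) := by
  obtain ⟨c, hc, H⟩ := ordered_case σ hσ
  refine ⟨c, hc, ?_⟩
  intro b w₁ w₂ h1 h2
  rcases le_total (‖w₁ - b‖) (‖w₂ - b‖) with hle | hle
  · exact H b w₁ w₂ h1 h2 hle
  · have hswap := H b w₂ w₁ h2 h1 hle
    have hid : ∀ t : ℝ, w₂ + (1-t) • (w₁ - w₂) - b = w₁ + t • (w₂ - w₁) - b := by
      intro t; module
    have hsym : ∫⁻ t in Set.Icc (0:ℝ) 1,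
          ENNReal.ofReal (‖w₂ + t • (w₁ - w₂) - b‖ ^ σ)
        = ∫⁻ t in Set.Icc (0:ℝ) 1,
          ENNReal.ofReal (‖w₁ + t • (w₂ - w₁) - b‖ ^ σ) := by
      rw [← seg_symm_aux (fun t => ENNReal.ofReal (‖w₂ + t • (w₁ - w₂) - b‖ ^ σ))]
      refine setLIntegral_congr_fun measurableSet_Icc (fun t _ => ?_)
      rw [hid t]
    calc ENNReal.ofReal (c * ‖w₁ - b‖ ^ ((σ : ℝ) / 2) *
            ‖w₂ - b‖ ^ ((σ : ℝ) / 2))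
        = ENNReal.ofReal (c * ‖w₂ - b‖ ^ ((σ : ℝ) / 2) *
            ‖w₁ - b‖ ^ ((σ : ℝ) / 2)) := by ring_nf
      _ ≤ ∫⁻ t in Set.Icc (0:ℝ) 1,
            ENNReal.ofReal (‖w₂ + t • (w₁ - w₂) - b‖ ^ σ) := hswap
      _ = _ := hsym

end
end

section
/- Let Γ(z) = (P₁(z), P₂(z), P₃(z)) with P₁, P₂, P₃ complex polynomials, and set L₁(z) = P₁'(z), L₂(z) = P₁'(z)P₂''(z) − P₂'(z)P₁''(z), and L₃(z) = det(Γ'(z), Γ''(z), Γ'''(z)). Let z₁, z₂, z₃ ∈ ℂ be such that L₁ and L₂ have no zeros on the closed convex hull of {z₁, z₂, z₃}. Then the complex Jacobian of the sum map Φ_Γ(z₁,z₂,z₃) = Γ(z₁)+Γ(z₂)+Γ(z₃) satisfies det(Γ'(z₁), Γ'(z₂), Γ'(z₃)) = L₁(z₁)L₁(z₂)L₁(z₃) · ∫_{z₁}^{z₂} ∫_{z₂}^{z₃} [L₂(w₁)L₂(w₂) / (L₁(w₁)² L₁(w₂)²)] · ( ∫_{w₁}^{w₂} L₁(y)L₃(y)/L₂(y)²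 dy ) dw₂ dw₁, where each integral is the line integral along the straight segment between its endpoints. -/
open MeasureTheory Polynomial

noncomputable section

def pd (n : ℕ) (p : Polynomial ℂ) : Polynomial ℂ := (fun q => derivative q)^[n] p

def Lcurve (P : Fin 3 → Polynomial ℂ) (z : ℂ) : ℂ :=
  Matrix.det (Matrix.of fun i j : Fin 3 => (pd ((j : ℕ) + 1) (P i)).eval z)

def Jdet (P : Fin 3 → Polynomial ℂ) (z : Fin 3 → ℂ) : ℂ :=
  Matrix.det (Matrix.of fun i s : Fin 3 => (derivative (P i)).eval (z s))

/-- `L₁(z) = P₁'(z)`. -/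
def Lone (P : Fin 3 → Polynomial ℂ) (z : ℂ) : ℂ := (derivative (P 0)).eval z

/-- `L₂(z) = P₁'(z)P₂''(z) - P₂'(z)P₁''(z)`. -/
def Ltwo (P : Fin 3 → Polynomial ℂ) (z : ℂ) : ℂ :=
  (derivative (P 0) * derivative (derivative (P 1)) -
    derivative (P 1) * derivative (derivative (P 0))).eval z

/-- The line integral along the straight segment from `u` to `v`:
`∫_u^v f(y) dy = (v - u) ∫₀¹ f(u + t(v-u)) dt`. -/
def lineInt (f : ℂ → ℂ) (u v : ℂ) : ℂ :=
  (v - u) * ∫ t in (0 : ℝ)..1, f (u + t • (v - u))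

/-! ### Auxiliary material -/

def PB (P : Fin 3 → Polynomial ℂ) : Polynomial ℂ :=
  derivative (P 0) * derivative (derivative (P 1)) -
    derivative (P 1) * derivative (derivative (P 0))

def PBt (P : Fin 3 → Polynomial ℂ) : Polynomial ℂ :=
  derivative (P 0) * derivative (derivative (P 2)) -
    derivative (P 2) * derivative (derivative (P 0))

lemma Ltwo_eval (P : Fin 3 → Polynomial ℂ) (z : ℂ) : Ltwo P z = (PB P).eval z := rfl

lemma pd_one (p : Polynomial ℂ) : pd 1 p = derivative p := rfl
lemma pd_two (p : Polynomial ℂ) : pd 2 p = derivative (derivative p) := rfl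
lemma pd_three (p : Polynomial ℂ) : pd 3 p = derivative (derivative (derivative p)) := rfl

lemma Lcurve_expand (P : Fin 3 → Polynomial ℂ) (z : ℂ) : Lcurve P z =
    (derivative (P 0)).eval z * ((derivative (derivative (P 1))).eval z * (derivative (derivative (derivative (P 2)))).eval z
      - (derivative (derivative (P 2))).eval z * (derivative (derivative (derivative (P 1)))).eval z)
    - (derivative (derivative (P 0))).eval z * ((derivative (P 1)).eval z * (derivative (derivative (derivative (P 2)))).eval z
      - (derivative (P 2)).eval z * (derivative (derivative (derivative (P 1)))).eval z)
    + (derivative (derivative (derivative (P 0)))).eval z * ((derivative (P 1)).eval z * (derivative (derivative (P 2))).eval z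
      - (derivative (P 2)).eval z * (derivative (derivative (P 1))).eval z) := by
  simp [Lcurve, Matrix.det_fin_three, pd_one, pd_two, pd_three]; ring

lemma Jdet_expand (P : Fin 3 → Polynomial ℂ) (z₁ z₂ z₃ : ℂ) : Jdet P ![z₁, z₂, z₃] =
    (derivative (P 0)).eval z₁ * ((derivative (P 1)).eval z₂ * (derivative (P 2)).eval z₃
      - (derivative (P 1)).eval z₃ * (derivative (P 2)).eval z₂)
    - (derivative (P 0)).eval z₂ * ((derivative (P 1)).eval z₁ * (derivative (P 2)).eval z₃
      - (derivative (P 1)).eval z₃ * (derivative (P 2)).eval z₁)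
    + (derivative (P 0)).eval z₃ * ((derivative (P 1)).eval z₁ * (derivative (P 2)).eval z₂
      - (derivative (P 1)).eval z₂ * (derivative (P 2)).eval z₁) := by
  simp [Jdet, Matrix.det_fin_three]; ring

lemma mem_seg {u v : ℂ} {t : ℝ} (ht : t ∈ Set.uIcc (0:ℝ) 1) :
    u + t • (v - u) ∈ segment ℝ u v := by
  rw [segment_eq_image']
  exact ⟨t, by simpa [Set.uIcc_of_le (zero_le_one)] using ht, rfl⟩

lemma lineInt_eq_sub {f F : ℂ → ℂ} {u v : ℂ}
    (hF : ∀ y ∈ segment ℝ u v, HasDerivAt F (f y) y)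
    (hf : ContinuousOn f (segment ℝ u v)) : lineInt f u v = F v - F u := by
  have hγc : Continuous fun t : ℝ => u + t • (v - u) := by continuity
  have h1 : ∀ t ∈ Set.uIcc (0:ℝ) 1,
      HasDerivAt (fun s : ℝ => F (u + s • (v - u))) ((v - u) * f (u + t • (v - u))) t := by
    intro t ht
    have hγ : HasDerivAt (fun s : ℝ => u + s • (v - u)) (v - u) t := by
      simpa using ((hasDerivAt_id t).smul_const (v - u)).const_add u
    have := (hF _ (mem_seg ht)).scomp t hγ
    simpa [Function.comp_def, smul_eq_mul, mul_comm] using this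
  have h2 : IntervalIntegrable (fun t : ℝ => (v - u) * f (u + t • (v - u))) volume 0 1 := by
    apply ContinuousOn.intervalIntegrable
    exact continuousOn_const.mul (hf.comp hγc.continuousOn fun t ht => mem_seg ht)
  have h3 := intervalIntegral.integral_eq_sub_of_hasDerivAt h1 h2
  rw [intervalIntegral.integral_const_mul] at h3
  simpa [lineInt] using h3

lemma lineInt_ratio (A B : Polynomial ℂ) {K : Set ℂ} (hK : Convex ℝ K) {u v : ℂ}
    (hu : u ∈ K) (hv : v ∈ K) {f : ℂ → ℂ}
    (hB : ∀ y ∈ K, B.eval y ≠ 0)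
    (hf : ∀ y ∈ K, f y =
      ((derivative A).eval y * B.eval y - A.eval y * (derivative B).eval y) / (B.eval y) ^ 2) :
    lineInt f u v = A.eval v / B.eval v - A.eval u / B.eval u := by
  have hseg : segment ℝ u v ⊆ K := hK.segment_subset hu hv
  apply lineInt_eq_sub (F := fun y => A.eval y / B.eval y)
  · intro y hy
    rw [hf y (hseg hy)]
    exact (A.hasDerivAt y).div (B.hasDerivAt y) (hB y (hseg hy))
  · have hc : ContinuousOn (fun y =>
        ((derivative A).eval y * B.eval y - A.eval y * (derivative B).eval y) / (B.eval y) ^ 2)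
        (segment ℝ u v) := by
      apply ContinuousOn.div
      · exact (((derivative A).continuous.mul B.continuous).sub
          (A.continuous.mul (derivative B).continuous)).continuousOn
      · exact (B.continuous.pow 2).continuousOn
      · exact fun y hy => pow_ne_zero _ (hB y (hseg hy))
    exact hc.congr fun y hy => hf y (hseg hy)

lemma step1 (P : Fin 3 → Polynomial ℂ) {K : Set ℂ} (hK : Convex ℝ K)
    (hL2 : ∀ w ∈ K, Ltwo P w ≠ 0)
    {w₁ w₂ : ℂ} (h1 : w₁ ∈ K) (h2 : w₂ ∈ K) :
    lineInt (fun y => Lone P y * Lcurve P y / Ltwo P y ^ 2) w₁ w₂ =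
      (Ltwo P w₁ * (PBt P).eval w₂ - (PBt P).eval w₁ * Ltwo P w₂) / (Ltwo P w₁ * Ltwo P w₂) := by
  have h := lineInt_ratio (C (Ltwo P w₁) * PBt P - C ((PBt P).eval w₁) * PB P)
      (C (Ltwo P w₁) * PB P) hK h1 h2
      (f := fun y => Lone P y * Lcurve P y / Ltwo P y ^ 2)
      (fun y hy => by
        simp only [eval_mul, eval_C]
        exact mul_ne_zero (hL2 _ h1) (hL2 _ hy))
      (fun y hy => by
        have e1 : Ltwo P y ≠ 0 := hL2 _ hy
        have e2 : Ltwo P w₁ ≠ 0 := hL2 _ h1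
        simp only [Lcurve_expand, PB, PBt, Lone, Ltwo, derivative_mul, derivative_sub,
          derivative_C, zero_mul, zero_add, eval_mul, eval_sub, eval_add, eval_C] at *
        field_simp [e1, e2]
        ring)
  rw [h]
  have hz : (C (Ltwo P w₁) * PBt P - C ((PBt P).eval w₁) * PB P).eval w₁ = 0 := by
    simp [eval_mul, eval_sub, eval_C, Ltwo_eval]; ring
  rw [hz]
  simp only [eval_mul, eval_sub, eval_C, Ltwo_eval, zero_div, sub_zero]

set_option maxHeartbeats 1000000 in
/-- the complex Dendrinos–Wright integral representation of the Jacobian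
`det(Γ'(z₁), Γ'(z₂), Γ'(z₃))`, valid when `L₁` and `L₂` have no zeros on the convex hull
of `{z₁, z₂, z₃}`. -/
theorem jacobian_integral_representation (P : Fin 3 → Polynomial ℂ) (z₁ z₂ z₃ : ℂ)
    (hnz : ∀ w ∈ convexHull ℝ ({z₁, z₂, z₃} : Set ℂ), Lone P w ≠ 0 ∧ Ltwo P w ≠ 0) :
    Jdet P ![z₁, z₂, z₃] =
      Lone P z₁ * Lone P z₂ * Lone P z₃ *
        lineInt (fun w₁ =>
          lineInt (fun w₂ =>
            (Ltwo P w₁ * Ltwo P w₂) / ((Lone P w₁) ^ 2 * (Lone P w₂) ^ 2) *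
              lineInt (fun y => Lone P y * Lcurve P y / (Ltwo P y) ^ 2) w₁ w₂) z₂ z₃) z₁ z₂ := by
  set K := convexHull ℝ ({z₁, z₂, z₃} : Set ℂ) with hKdef
  have hKc : Convex ℝ K := convex_convexHull ℝ _
  have hz1 : z₁ ∈ K := subset_convexHull ℝ _ (by simp)
  have hz2 : z₂ ∈ K := subset_convexHull ℝ _ (by simp)
  have hz3 : z₃ ∈ K := subset_convexHull ℝ _ (by simp)
  have hL1 : ∀ w ∈ K, Lone P w ≠ 0 := fun w hw => (hnz w hw).1
  have hL2 : ∀ w ∈ K, Ltwo P w ≠ 0 := fun w hw => (hnz w hw).2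
  -- step 2 : the middle line integral, for w₁ ∈ K
  have step2 : ∀ w₁ ∈ K,
      lineInt (fun w₂ => Ltwo P w₁ * Ltwo P w₂ / (Lone P w₁ ^ 2 * Lone P w₂ ^ 2) *
          lineInt (fun y => Lone P y * Lcurve P y / Ltwo P y ^ 2) w₁ w₂) z₂ z₃ =
        (C (Lone P z₁ * Ltwo P w₁) * derivative (P 2)
          - C (Lone P z₁ * (PBt P).eval w₁) * derivative (P 1)
          + C ((derivative (P 1)).eval z₁ * (PBt P).eval w₁
              - (derivative (P 2)).eval z₁ * Ltwo P w₁) * derivative (P 0)).eval z₃ /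
          (C (Lone P z₁ * Lone P w₁ ^ 2) * derivative (P 0)).eval z₃ -
        (C (Lone P z₁ * Ltwo P w₁) * derivative (P 2)
          - C (Lone P z₁ * (PBt P).eval w₁) * derivative (P 1)
          + C ((derivative (P 1)).eval z₁ * (PBt P).eval w₁
              - (derivative (P 2)).eval z₁ * Ltwo P w₁) * derivative (P 0)).eval z₂ /
          (C (Lone P z₁ * Lone P w₁ ^ 2) * derivative (P 0)).eval z₂ := by
    intro w₁ h1
    apply lineInt_ratio _ _ hKc hz2 hz3
    · intro y hy
      simp only [eval_mul, eval_C]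
      exact mul_ne_zero (mul_ne_zero (hL1 _ hz1) (pow_ne_zero _ (hL1 _ h1))) (hL1 _ hy)
    · intro w₂ hw₂
      have hstep1 := step1 P hKc hL2 h1 hw₂
      simp only [hstep1]
      have e1 : Lone P z₁ ≠ 0 := hL1 _ hz1
      have e2 : Lone P w₁ ≠ 0 := hL1 _ h1
      have e3 : Lone P w₂ ≠ 0 := hL1 _ hw₂
      have e4 : Ltwo P w₁ ≠ 0 := hL2 _ h1
      have e5 : Ltwo P w₂ ≠ 0 := hL2 _ hw₂
      simp only [PB, PBt, Lone, Ltwo, derivative_mul, derivative_sub, derivative_add,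
        derivative_C, zero_mul, zero_add, eval_mul, eval_sub, eval_add, eval_C] at *
      field_simp [e1, e2, e3, e4, e5]
      ring
  -- step 3 : the outer line integral
  have step3 := lineInt_ratio
      (C ((Lone P z₃)⁻¹) *
        (C ((derivative (P 2)).eval z₁ * (derivative (P 1)).eval z₃
            - (derivative (P 1)).eval z₁ * (derivative (P 2)).eval z₃) * derivative (P 0)
          + C (Lone P z₁ * (derivative (P 2)).eval z₃
            - (derivative (P 2)).eval z₁ * Lone P z₃) * derivative (P 1)
          + C ((derivative (P 0)).eval z₃ * (derivative (P 1)).eval z₁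
            - Lone P z₁ * (derivative (P 1)).eval z₃) * derivative (P 2))
        - C ((Lone P z₂)⁻¹) *
        (C ((derivative (P 2)).eval z₁ * (derivative (P 1)).eval z₂
            - (derivative (P 1)).eval z₁ * (derivative (P 2)).eval z₂) * derivative (P 0)
          + C (Lone P z₁ * (derivative (P 2)).eval z₂
            - (derivative (P 2)).eval z₁ * Lone P z₂) * derivative (P 1)
          + C ((derivative (P 0)).eval z₂ * (derivative (P 1)).eval z₁
            - Lone P z₁ * (derivative (P 1)).eval z₂) * derivative (P 2)))
      (C (Lone P z₁) * derivative (P 0)) hKc hz1 hz2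
      (f := fun w₁ =>
          lineInt (fun w₂ => Ltwo P w₁ * Ltwo P w₂ / (Lone P w₁ ^ 2 * Lone P w₂ ^ 2) *
            lineInt (fun y => Lone P y * Lcurve P y / Ltwo P y ^ 2) w₁ w₂) z₂ z₃)
      (fun y hy => by
        simp only [eval_mul, eval_C]
        exact mul_ne_zero (hL1 _ hz1) (hL1 _ hy))
      (fun w₁ h1 => by
        have h2 := step2 w₁ h1
        simp only [h2]
        have e1 : Lone P z₁ ≠ 0 := hL1 _ hz1
        have e2 : Lone P z₂ ≠ 0 := hL1 _ hz2
        have e3 : Lone P z₃ ≠ 0 := hL1 _ hz3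
        have e4 : Lone P w₁ ≠ 0 := hL1 _ h1
        simp only [PB, PBt, Lone, Ltwo, derivative_mul, derivative_sub, derivative_add,
          derivative_C, zero_mul, zero_add, eval_mul, eval_sub, eval_add, eval_C] at *
        field_simp [e1, e2, e3, e4]
        ring)
  rw [step3, Jdet_expand]
  have e1 : Lone P z₁ ≠ 0 := hL1 _ hz1
  have e2 : Lone P z₂ ≠ 0 := hL1 _ hz2
  have e3 : Lone P z₃ ≠ 0 := hL1 _ hz3
  simp only [Lone, eval_mul, eval_sub, eval_add, eval_C] at *
  field_simp [e1, e2, e3]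
  ring

end
end

section
/- For every integer d ≥ 1 and every ε ∈ (0, π/8] with 2π/ε ∈ ℕ, there exist an integer M = M(d, ε) and a constant C = C(d, ε) ≥ 1 with the following property: for every nonconstant complex polynomial Q of degree at most d, the plane ℂ can be covered by at most M convex sets B₁, …, B_M such that for each l there exist a root b_l of Q, an integer k_l with 1 ≤ k_l ≤ d, and a constant c_l > 0 with C^{-1} c_l |z − b_l|^{k_l} ≤ |Q(z)| ≤ C c_l |z − b_l|^{k_l} for all z ∈ B_l. -/
open Polynomial

noncomputable section
namespace CPD


noncomputable def dir (φ : ℝ) : ℂ := Complex.exp (-(φ:ℂ) * Complex.I)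

lemma abs_dir (φ : ℝ) : ‖dir φ‖ = 1 := by
  rw [dir, Complex.norm_exp]
  simp

lemma dir_mul_im (φ : ℝ) (y : ℂ) :
    (dir φ * y).im = ‖y‖ * Real.sin (y.arg - φ) ∧
    (dir φ * y).re = ‖y‖ * Real.cos (y.arg - φ) := by
  have h : dir φ * y = (‖y‖ : ℂ) * Complex.exp ((↑(y.arg - φ)) * Complex.I) := by
    conv_lhs => rw [← Complex.norm_mul_exp_arg_mul_I y]
    rw [dir, mul_left_comm, ← Complex.exp_add]
    congr 2
    push_cast
    ring
  rw [h]
  constructor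
  · rw [Complex.im_ofReal_mul, Complex.exp_ofReal_mul_I_im]
  · rw [Complex.re_ofReal_mul, Complex.exp_ofReal_mul_I_re]

lemma re_dir_le_abs (φ : ℝ) (y : ℂ) : (dir φ * y).re ≤ ‖y‖ := by
  calc (dir φ * y).re ≤ ‖dir φ * y‖ := Complex.re_le_norm _
  _ = ‖y‖ := by rw [norm_mul, abs_dir, one_mul]


lemma comb_eq (u v x y : ℂ) (a b : ℝ) (hab : a + b = 1) :
    u * ((a • x + b • y) - v) = a • (u * (x - v)) + b • (u * (y - v)) := by
  have h : (a:ℂ) + (b:ℂ) = 1 := by exact_mod_cast congrArg (fun t : ℝ => (t:ℂ)) hab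
  simp only [Complex.real_smul]
  linear_combination (u * v) * h

lemma convex_re_ge (u v : ℂ) (c : ℝ) : Convex ℝ {z : ℂ | c ≤ (u * (z - v)).re} := by
  intro x hx y hy a b ha hb hab
  simp only [Set.mem_setOf_eq] at *
  rw [comb_eq u v x y a b hab, Complex.add_re, Complex.real_smul, Complex.real_smul,
    Complex.re_ofReal_mul, Complex.re_ofReal_mul]
  have h1 : a * c + b * c = c := by rw [← add_mul, hab, one_mul]
  linarith [mul_le_mul_of_nonneg_left hx ha, mul_le_mul_of_nonneg_left hy hb]

lemma convex_im_ge (u v : ℂ) (c : ℝ) : Convex ℝ {z : ℂ | c ≤ (u * (z - v)).im} := by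
  intro x hx y hy a b ha hb hab
  simp only [Set.mem_setOf_eq] at *
  rw [comb_eq u v x y a b hab, Complex.add_im, Complex.real_smul, Complex.real_smul,
    Complex.im_ofReal_mul, Complex.im_ofReal_mul]
  have h1 : a * c + b * c = c := by rw [← add_mul, hab, one_mul]
  linarith [mul_le_mul_of_nonneg_left hx ha, mul_le_mul_of_nonneg_left hy hb]

lemma convex_im_le (u v : ℂ) (c : ℝ) : Convex ℝ {z : ℂ | (u * (z - v)).im ≤ c} := by
  intro x hx y hy a b ha hb hab
  simp only [Set.mem_setOf_eq] at *
  rw [comb_eq u v x y a b hab, Complex.add_im, Complex.real_smul, Complex.real_smul,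
    Complex.im_ofReal_mul, Complex.im_ofReal_mul]
  have h1 : a * c + b * c = c := by rw [← add_mul, hab, one_mul]
  linarith [mul_le_mul_of_nonneg_left hx ha, mul_le_mul_of_nonneg_left hy hb]

lemma dist_le_dist_iff (b w z : ℂ) :
    dist z b ≤ dist z w ↔
      2 * (z.re * (w.re - b.re) + z.im * (w.im - b.im)) ≤
        Complex.normSq w - Complex.normSq b := by
  rw [Complex.dist_eq, Complex.dist_eq, Complex.norm_def, Complex.norm_def,
    Real.sqrt_le_sqrt_iff (Complex.normSq_nonneg _)]
  simp only [Complex.normSq_apply, Complex.sub_re, Complex.sub_im]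
  constructor <;> intro h <;> nlinarith [h]

lemma convex_vor_half (b w : ℂ) : Convex ℝ {z : ℂ | dist z b ≤ dist z w} := by
  intro x hx y hy a c ha hc hac
  simp only [Set.mem_setOf_eq, dist_le_dist_iff b w] at *
  have hre : (a • x + c • y).re = a * x.re + c * y.re := by
    simp [Complex.real_smul, Complex.add_re, Complex.re_ofReal_mul]
  have him : (a • x + c • y).im = a * x.im + c * y.im := by
    simp [Complex.real_smul, Complex.add_im, Complex.im_ofReal_mul]
  rw [hre, him]
  have key : 2 * ((a * x.re + c * y.re) * (w.re - b.re) + (a * x.im + c * y.im) * (w.im - b.im))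
      = a * (2 * (x.re * (w.re - b.re) + x.im * (w.im - b.im)))
        + c * (2 * (y.re * (w.re - b.re) + y.im * (w.im - b.im))) := by ring
  have h1 : a * (Complex.normSq w - Complex.normSq b) + c * (Complex.normSq w - Complex.normSq b)
      = Complex.normSq w - Complex.normSq b := by rw [← add_mul, hac, one_mul]
  rw [key]
  linarith [mul_le_mul_of_nonneg_left hx ha, mul_le_mul_of_nonneg_left hy hc]


lemma prod_map_le {α : Type*} (s : Multiset α) (f g : α → ℝ)
    (h0 : ∀ a ∈ s, 0 ≤ f a) (h : ∀ a ∈ s, f a ≤ g a) :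
    (s.map f).prod ≤ (s.map g).prod := by
  induction s using Multiset.induction_on with
  | empty => simp
  | cons a s ih =>
    simp only [Multiset.map_cons, Multiset.prod_cons]
    have hf := h0 a (Multiset.mem_cons_self a s)
    have hg := h a (Multiset.mem_cons_self a s)
    have hps : 0 ≤ (Multiset.map f s).prod := by
      apply Multiset.prod_nonneg
      intro x hx
      obtain ⟨y, hy, rfl⟩ := Multiset.mem_map.1 hx
      exact h0 y (Multiset.mem_cons_of_mem hy)
    exact mul_le_mul hg (ih (fun x hx => h0 x (Multiset.mem_cons_of_mem hx))
      (fun x hx => h x (Multiset.mem_cons_of_mem hx))) hps (le_trans hf hg)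

lemma prod_between (s : Multiset ℂ) (f g : ℂ → ℝ) (K : ℝ) (hK : 1 ≤ K)
    (h0 : ∀ w ∈ s, 0 ≤ g w) (hl : ∀ w ∈ s, g w ≤ K * f w) (hu : ∀ w ∈ s, f w ≤ K * g w) :
    K⁻¹ ^ Multiset.card s * (s.map g).prod ≤ (s.map f).prod ∧
      (s.map f).prod ≤ K ^ Multiset.card s * (s.map g).prod := by
  have hK0 : 0 < K := lt_of_lt_of_le one_pos hK
  have hf0 : ∀ w ∈ s, 0 ≤ f w := by
    intro w hw
    have := hl w hw
    have := h0 w hw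
    nlinarith
  constructor
  · have step : (s.map (fun w => K⁻¹ * g w)).prod ≤ (s.map f).prod := by
      apply prod_map_le
      · intro w hw
        exact mul_nonneg (inv_nonneg.2 hK0.le) (h0 w hw)
      · intro w hw
        rw [inv_mul_le_iff₀ hK0]
        exact hl w hw
    calc K⁻¹ ^ Multiset.card s * (s.map g).prod
        = (s.map (fun _ => K⁻¹)).prod * (s.map g).prod := by
          rw [Multiset.map_const', Multiset.prod_replicate]
      _ = (s.map (fun w => K⁻¹ * g w)).prod := by rw [← Multiset.prod_map_mul]
      _ ≤ (s.map f).prod := step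
  · have step : (s.map f).prod ≤ (s.map (fun w => K * g w)).prod := by
      apply prod_map_le
      · exact hf0
      · exact hu
    calc (s.map f).prod ≤ (s.map (fun w => K * g w)).prod := step
      _ = (s.map (fun _ => K)).prod * (s.map g).prod := by rw [← Multiset.prod_map_mul]
      _ = K ^ Multiset.card s * (s.map g).prod := by
          rw [Multiset.map_const', Multiset.prod_replicate]



/-- Combined product bound: if every factor is comparable (ratio ≤ 32) either to `|z-b|`
(near roots) or to `|b-w|` (far roots), then the full product is comparable to
`c' * |z-b|^k`. -/
lemma prod_bound (R : Multiset ℂ) (b z : ℂ) (e : ℝ)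
    (h : ∀ w ∈ R,
      (‖b - w‖ ≤ e →
        ‖z - b‖ ≤ 32 * ‖z - w‖ ∧
          ‖z - w‖ ≤ 32 * ‖z - b‖) ∧
      (¬ ‖b - w‖ ≤ e →
        ‖b - w‖ ≤ 32 * ‖z - w‖ ∧
          ‖z - w‖ ≤ 32 * ‖b - w‖)) :
    ((32:ℝ)⁻¹) ^ Multiset.card R *
        (((R.filter (fun w => ¬ ‖b - w‖ ≤ e)).map
            (fun w => ‖b - w‖)).prod *
          ‖z - b‖ ^ Multiset.card (R.filter (fun w => ‖b - w‖ ≤ e)))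
      ≤ (R.map (fun w => ‖z - w‖)).prod ∧
    (R.map (fun w => ‖z - w‖)).prod ≤
      (32:ℝ) ^ Multiset.card R *
        (((R.filter (fun w => ¬ ‖b - w‖ ≤ e)).map
            (fun w => ‖b - w‖)).prod *
          ‖z - b‖ ^ Multiset.card (R.filter (fun w => ‖b - w‖ ≤ e))) := by
  classical
  set p : ℂ → Prop := fun w => ‖b - w‖ ≤ e with hp
  set near := R.filter p with hnear
  set far := R.filter (fun w => ¬ p w) with hfar
  have hsplit : near + far = R := Multiset.filter_add_not p R
  have hmemn : ∀ w ∈ near, w ∈ R := fun w hw => Multiset.mem_of_le (Multiset.filter_le _ _) hw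
  have hmemf : ∀ w ∈ far, w ∈ R := fun w hw => Multiset.mem_of_le (Multiset.filter_le _ _) hw
  -- near part
  have hnearcmp := prod_between near (fun w => ‖z - w‖) (fun _ => ‖z - b‖)
    32 (by norm_num)
    (fun w _ => (norm_nonneg _))
    (fun w hw => ((h w (hmemn w hw)).1 ((Multiset.mem_filter.1 hw).2)).1)
    (fun w hw => ((h w (hmemn w hw)).1 ((Multiset.mem_filter.1 hw).2)).2)
  have hfarcmp := prod_between far (fun w => ‖z - w‖) (fun w => ‖b - w‖)
    32 (by norm_num)
    (fun w _ => (norm_nonneg _))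
    (fun w hw => ((h w (hmemf w hw)).2 ((Multiset.mem_filter.1 hw).2)).1)
    (fun w hw => ((h w (hmemf w hw)).2 ((Multiset.mem_filter.1 hw).2)).2)
  have hconst : ((near.map (fun _ => ‖z - b‖)).prod)
      = ‖z - b‖ ^ Multiset.card near := by
    rw [Multiset.map_const', Multiset.prod_replicate]
  rw [hconst] at hnearcmp
  have hprodsplit : (R.map (fun w => ‖z - w‖)).prod
      = (near.map (fun w => ‖z - w‖)).prod * (far.map (fun w => ‖z - w‖)).prod := by
    rw [← hsplit, Multiset.map_add, Multiset.prod_add]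
  have hcard : Multiset.card near + Multiset.card far = Multiset.card R := by
    rw [← hsplit, Multiset.card_add]
  have hn0 : (0:ℝ) ≤ (near.map (fun w => ‖z - w‖)).prod :=
    Multiset.prod_nonneg (by
      intro x hx; obtain ⟨y, hy, rfl⟩ := Multiset.mem_map.1 hx; exact norm_nonneg _)
  have hf0 : (0:ℝ) ≤ (far.map (fun w => ‖z - w‖)).prod :=
    Multiset.prod_nonneg (by
      intro x hx; obtain ⟨y, hy, rfl⟩ := Multiset.mem_map.1 hx; exact norm_nonneg _)
  have hc0 : (0:ℝ) ≤ (far.map (fun w => ‖b - w‖)).prod :=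
    Multiset.prod_nonneg (by
      intro x hx; obtain ⟨y, hy, rfl⟩ := Multiset.mem_map.1 hx; exact norm_nonneg _)
  have hr0 : (0:ℝ) ≤ ‖z - b‖ ^ Multiset.card near := by positivity
  constructor
  · rw [hprodsplit]
    calc ((32:ℝ)⁻¹) ^ Multiset.card R *
          ((far.map (fun w => ‖b - w‖)).prod * ‖z - b‖ ^ Multiset.card near)
        = (((32:ℝ)⁻¹) ^ Multiset.card near * ‖z - b‖ ^ Multiset.card near)
            * (((32:ℝ)⁻¹) ^ Multiset.card far * (far.map (fun w => ‖b - w‖)).prod) := by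
          rw [← hcard]; ring
      _ ≤ (near.map (fun w => ‖z - w‖)).prod * (far.map (fun w => ‖z - w‖)).prod := by
          apply mul_le_mul hnearcmp.1 hfarcmp.1 (by positivity) hn0
  · rw [hprodsplit]
    calc (near.map (fun w => ‖z - w‖)).prod * (far.map (fun w => ‖z - w‖)).prod
        ≤ ((32:ℝ) ^ Multiset.card near * ‖z - b‖ ^ Multiset.card near)
            * ((32:ℝ) ^ Multiset.card far * (far.map (fun w => ‖b - w‖)).prod) := by
          apply mul_le_mul hnearcmp.2 hfarcmp.2 hf0 (by positivity)
      _ = (32:ℝ) ^ Multiset.card R *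
          ((far.map (fun w => ‖b - w‖)).prod * ‖z - b‖ ^ Multiset.card near) := by
          rw [← hcard]; ring

/-! Pieces of the decomposition -/

def sector (b : ℂ) (ε : ℝ) (t : ℕ) : Set ℂ :=
  {z | 0 ≤ (dir (t * ε) * (z - b)).im ∧ (dir ((t + 1) * ε) * (z - b)).im ≤ 0}

def chord (b : ℂ) (ε : ℝ) (t : ℕ) (c : ℝ) : Set ℂ :=
  {z | c ≤ (dir (t * ε + ε / 2) * (z - b)).re}

def vor (F : Finset ℂ) (b : ℂ) : Set ℂ := {z | ∀ w ∈ F, dist z b ≤ dist z w}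

def balls (F : Finset ℂ) (b : ℂ) (e : ℝ) : Set ℂ :=
  {z | ∀ w ∈ F, e < ‖b - w‖ → dist z b ≤ ‖b - w‖ / 2}

def pieceA (F : Finset ℂ) (b : ℂ) : Set ℂ := balls F b 0

def pieceB (F : Finset ℂ) (b : ℂ) (ε e : ℝ) (t : ℕ) : Set ℂ :=
  vor F b ∩ Metric.closedBall b (2 * e) ∩ sector b ε t ∩ chord b ε t (e / 4)

def pieceC (F : Finset ℂ) (b : ℂ) (ε e : ℝ) (t : ℕ) : Set ℂ :=
  vor F b ∩ balls F b e ∩ sector b ε t ∩ chord b ε t e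

lemma convex_sector (b : ℂ) (ε : ℝ) (t : ℕ) : Convex ℝ (sector b ε t) := by
  have h1 := convex_im_ge (dir (t * ε)) b 0
  have h2 := convex_im_le (dir ((t + 1) * ε)) b 0
  exact h1.inter h2

lemma convex_chord (b : ℂ) (ε : ℝ) (t : ℕ) (c : ℝ) : Convex ℝ (chord b ε t c) :=
  convex_re_ge _ b c

lemma convex_vor (F : Finset ℂ) (b : ℂ) : Convex ℝ (vor F b) := by
  intro x hx y hy a c ha hc hac
  intro w hw
  exact convex_vor_half b w (hx w hw) (hy w hw) ha hc hac

lemma convex_balls (F : Finset ℂ) (b : ℂ) (e : ℝ) : Convex ℝ (balls F b e) := by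
  intro x hx y hy a c ha hc hac
  intro w hw hfar
  exact Metric.mem_closedBall.1 <|
    (convex_closedBall b (‖b - w‖ / 2))
      (Metric.mem_closedBall.2 (hx w hw hfar)) (Metric.mem_closedBall.2 (hy w hw hfar)) ha hc hac

lemma convex_pieceA (F : Finset ℂ) (b : ℂ) : Convex ℝ (pieceA F b) := convex_balls F b 0

lemma convex_pieceB (F : Finset ℂ) (b : ℂ) (ε e : ℝ) (t : ℕ) : Convex ℝ (pieceB F b ε e t) :=
  (((convex_vor F b).inter (convex_closedBall b (2 * e))).inter (convex_sector b ε t)).inter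
    (convex_chord b ε t (e / 4))

lemma convex_pieceC (F : Finset ℂ) (b : ℂ) (ε e : ℝ) (t : ℕ) : Convex ℝ (pieceC F b ε e t) :=
  (((convex_vor F b).inter (convex_balls F b e)).inter (convex_sector b ε t)).inter
    (convex_chord b ε t e)
lemma tri1 (z b w : ℂ) : ‖z - w‖ ≤ ‖z - b‖ + ‖b - w‖ := by
  have h := norm_add_le (z - b) (b - w)
  rwa [sub_add_sub_cancel] at h

lemma tri2 (z b w : ℂ) : ‖b - w‖ ≤ ‖z - b‖ + ‖z - w‖ := by
  have h := norm_add_le (b - z) (z - w)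
  rw [sub_add_sub_cancel] at h
  rwa [norm_sub_rev b z] at h

/-- The comparability hypothesis satisfied on each piece. -/
def Cmp (b z : ℂ) (e : ℝ) (R : Multiset ℂ) : Prop :=
  ∀ w ∈ R,
    (‖b - w‖ ≤ e →
      ‖z - b‖ ≤ 32 * ‖z - w‖ ∧
        ‖z - w‖ ≤ 32 * ‖z - b‖) ∧
    (¬ ‖b - w‖ ≤ e →
      ‖b - w‖ ≤ 32 * ‖z - w‖ ∧
        ‖z - w‖ ≤ 32 * ‖b - w‖)

lemma pieceA_est (F : Finset ℂ) (R : Multiset ℂ) (hRF : ∀ w ∈ R, w ∈ F) (b z : ℂ)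
    (hz : z ∈ pieceA F b) : Cmp b z 0 R := by
  intro w hw
  have h0 : (0:ℝ) ≤ ‖z - b‖ := norm_nonneg _
  have h1 : (0:ℝ) ≤ ‖z - w‖ := norm_nonneg _
  constructor
  · intro hnear
    have : ‖b - w‖ = 0 := le_antisymm hnear (norm_nonneg _)
    have hbw : b = w := by
      have := norm_eq_zero.1 this
      linear_combination this
    subst hbw
    constructor <;> linarith
  · intro hfar
    push_neg at hfar
    have hball : ‖z - b‖ ≤ ‖b - w‖ / 2 := by
      have := hz w (hRF w hw) hfar
      rwa [Complex.dist_eq] at this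
    have t1 := tri1 z b w
    have t2 := tri2 z b w
    constructor <;> linarith

lemma pieceB_est (F : Finset ℂ) (R : Multiset ℂ) (hRF : ∀ w ∈ R, w ∈ F) (b z : ℂ) (ε e : ℝ)
    (t : ℕ) (hz : z ∈ pieceB F b ε e t) : Cmp b z e R := by
  obtain ⟨⟨⟨hvor, hball⟩, hsec⟩, hchord⟩ := hz
  have hr1 : e / 4 ≤ ‖z - b‖ :=
    le_trans hchord (re_dir_le_abs _ _)
  have hr2 : ‖z - b‖ ≤ 2 * e := by
    have := Metric.mem_closedBall.1 hball
    rwa [Complex.dist_eq] at this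
  intro w hw
  have h0 : (0:ℝ) ≤ ‖z - b‖ := norm_nonneg _
  have h1 : (0:ℝ) ≤ ‖z - w‖ := norm_nonneg _
  have hvz : ‖z - b‖ ≤ ‖z - w‖ := by
    have := hvor w (hRF w hw)
    rwa [Complex.dist_eq, Complex.dist_eq] at this
  have t1 := tri1 z b w
  have t2 := tri2 z b w
  constructor
  · intro hnear
    constructor <;> linarith
  · intro hfar
    push_neg at hfar
    constructor
    · by_cases h8 : ‖b - w‖ ≤ 8 * e
      · linarith
      · push_neg at h8
        linarith
    · linarith

lemma pieceC_est (F : Finset ℂ) (R : Multiset ℂ) (hRF : ∀ w ∈ R, w ∈ F) (b z : ℂ) (ε e : ℝ)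
    (t : ℕ) (hz : z ∈ pieceC F b ε e t) : Cmp b z e R := by
  obtain ⟨⟨⟨hvor, hballs⟩, hsec⟩, hchord⟩ := hz
  have hr1 : e ≤ ‖z - b‖ :=
    le_trans hchord (re_dir_le_abs _ _)
  intro w hw
  have h0 : (0:ℝ) ≤ ‖z - b‖ := norm_nonneg _
  have h1 : (0:ℝ) ≤ ‖z - w‖ := norm_nonneg _
  have hvz : ‖z - b‖ ≤ ‖z - w‖ := by
    have := hvor w (hRF w hw)
    rwa [Complex.dist_eq, Complex.dist_eq] at this
  have t1 := tri1 z b w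
  have t2 := tri2 z b w
  constructor
  · intro hnear
    constructor <;> linarith
  · intro hfar
    push_neg at hfar
    have hball : ‖z - b‖ ≤ ‖b - w‖ / 2 := by
      have := hballs w (hRF w hw) hfar
      rwa [Complex.dist_eq] at this
    constructor <;> linarith
lemma sector_cover (ε : ℝ) (hε0 : 0 < ε) (hε8 : ε ≤ Real.pi / 8) (m : ℕ)
    (hm : (m : ℝ) * ε = 2 * Real.pi) (y : ℂ) (hy : y ≠ 0) :
    ∃ t : ℕ, t < m ∧ 0 ≤ (dir (t * ε) * y).im ∧ (dir ((t + 1) * ε) * y).im ≤ 0 ∧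
      ‖y‖ / 2 ≤ (dir (t * ε + ε / 2) * y).re := by
  have hpi := Real.pi_pos
  have habs : 0 < ‖y‖ := by
    rw [norm_pos_iff]; exact hy
  set θ := y.arg with hθdef
  have hθ1 : -Real.pi < θ := Complex.neg_pi_lt_arg y
  have hθ2 : θ ≤ Real.pi := Complex.arg_le_pi y
  set ψ : ℝ := if θ < 0 then θ + 2 * Real.pi else θ with hψdef
  have hψ0 : 0 ≤ ψ := by
    rw [hψdef]; split_ifs with h
    · linarith
    · linarith [not_lt.1 h]
  have hψ2 : ψ < 2 * Real.pi := by
    rw [hψdef]; split_ifs with h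
    · linarith
    · linarith
  set t := Nat.floor (ψ / ε) with htdef
  have ht0 : (0:ℝ) ≤ ψ / ε := div_nonneg hψ0 hε0.le
  have ht1 : (t : ℝ) * ε ≤ ψ := by
    have h := Nat.floor_le ht0
    calc (t : ℝ) * ε ≤ (ψ / ε) * ε := mul_le_mul_of_nonneg_right h hε0.le
      _ = ψ := by field_simp
  have ht2 : ψ < ((t : ℝ) + 1) * ε := by
    have h := Nat.lt_floor_add_one (ψ / ε)
    calc ψ = (ψ / ε) * ε := by field_simp
      _ < ((t : ℝ) + 1) * ε := by
          apply mul_lt_mul_of_pos_right _ hε0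
          exact_mod_cast h
  have htm : t < m := by
    by_contra hcon
    push_neg at hcon
    have : (m : ℝ) ≤ (t : ℝ) := by exact_mod_cast hcon
    nlinarith
  -- trig identities: sin/cos at θ - φ equal those at ψ - φ
  have hshift : ∀ φ : ℝ, Real.sin (θ - φ) = Real.sin (ψ - φ) ∧
      Real.cos (θ - φ) = Real.cos (ψ - φ) := by
    intro φ
    rw [hψdef]
    split_ifs with h
    · have e1 : θ + 2 * Real.pi - φ = (θ - φ) + 2 * Real.pi := by ring
      rw [e1, Real.sin_add_two_pi, Real.cos_add_two_pi]
      exact ⟨rfl, rfl⟩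
    · exact ⟨rfl, rfl⟩
  refine ⟨t, htm, ?_, ?_, ?_⟩
  · rw [(dir_mul_im ((t : ℝ) * ε) y).1, ← hθdef, (hshift _).1]
    apply mul_nonneg habs.le
    apply Real.sin_nonneg_of_nonneg_of_le_pi
    · linarith
    · nlinarith
  · rw [(dir_mul_im (((t : ℝ) + 1) * ε) y).1, ← hθdef, (hshift _).1]
    apply mul_nonpos_of_nonneg_of_nonpos habs.le
    apply Real.sin_nonpos_of_nonpos_of_neg_pi_le
    · linarith
    · nlinarith
  · rw [(dir_mul_im ((t : ℝ) * ε + ε / 2) y).2, ← hθdef, (hshift _).2]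
    have hxb : |ψ - ((t : ℝ) * ε + ε / 2)| ≤ ε / 2 := by
      rw [abs_le]; constructor <;> linarith
    have hcos : (1:ℝ) / 2 ≤ Real.cos (ψ - ((t : ℝ) * ε + ε / 2)) := by
      rw [← Real.cos_abs]
      rw [← Real.cos_pi_div_three]
      apply Real.cos_le_cos_of_nonneg_of_le_pi (abs_nonneg _) (by linarith)
      nlinarith [hxb]
    calc ‖y‖ / 2 = ‖y‖ * (1 / 2) := by ring
      _ ≤ ‖y‖ * Real.cos (ψ - ((t : ℝ) * ε + ε / 2)) :=
          mul_le_mul_of_nonneg_left hcos habs.le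
lemma pad {M : ℕ} (P : Set ℂ → Prop) (S : Finset (Set ℂ)) (hcard : S.card ≤ M)
    (hcov : ∀ z : ℂ, ∃ s ∈ S, z ∈ s) (hall : ∀ s ∈ S, P s) (hP0 : P ∅) :
    ∃ B : Fin M → Set ℂ, (⋃ l, B l) = Set.univ ∧ ∀ l, P (B l) := by
  refine ⟨fun l => S.toList.getD l ∅, ?_, ?_⟩
  · ext z
    simp only [Set.mem_iUnion, Set.mem_univ, iff_true]
    obtain ⟨s, hs, hzs⟩ := hcov z
    have hmem : s ∈ S.toList := Finset.mem_toList.2 hs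
    obtain ⟨n, hn, he⟩ := List.mem_iff_getElem.1 hmem
    have hnM : n < M := lt_of_lt_of_le (by rwa [Finset.length_toList] at hn) hcard
    refine ⟨⟨n, hnM⟩, ?_⟩
    show z ∈ S.toList.getD n ∅
    rw [List.getD_eq_getElem _ _ hn, he]
    exact hzs
  · intro l
    by_cases h : (l : ℕ) < S.toList.length
    · show P (S.toList.getD l ∅)
      rw [List.getD_eq_getElem _ _ h]
      exact hall _ (Finset.mem_toList.1 (List.getElem_mem h))
    · show P (S.toList.getD l ∅)
      rw [List.getD_eq_default _ _ (le_of_not_gt h)]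
      exact hP0

lemma abs_eval (Q : Polynomial ℂ) (z : ℂ) :
    ‖Q.eval z‖ =
      ‖Q.leadingCoeff‖ * ((Q.roots.map (fun w => ‖z - w‖)).prod) := by
  conv_lhs => rw [← Polynomial.C_leadingCoeff_mul_prod_multiset_X_sub_C (IsAlgClosed.card_roots_eq_natDegree (p := Q))]
  rw [Polynomial.eval_mul, Polynomial.eval_C, Polynomial.eval_multiset_prod, norm_mul]
  congr 1
  rw [show ∀ s : Multiset ℂ, ‖s.prod‖ = (s.map norm).prod from
    fun s => map_multiset_prod (normHom (α := ℂ)) s, Multiset.map_map, Multiset.map_map]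
  congr 1
  apply Multiset.map_congr rfl
  intro w hw
  simp

/-- The estimate on a single piece, given the comparability property. -/
lemma piece_prop (d : ℕ) (Q : Polynomial ℂ) (hQne : Q ≠ 0)
    (hcardR : Multiset.card Q.roots ≤ d) (b : ℂ) (hbR : b ∈ Q.roots) (e : ℝ) (he : 0 ≤ e)
    (s : Set ℂ) (hest : ∀ z ∈ s, Cmp b z e Q.roots) :
    ∃ (k : ℕ) (c : ℝ), 1 ≤ k ∧ k ≤ d ∧ 0 < c ∧
      ∀ z ∈ s,
        ((32:ℝ) ^ d)⁻¹ * c * ‖z - b‖ ^ k ≤ ‖Q.eval z‖ ∧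
          ‖Q.eval z‖ ≤ (32:ℝ) ^ d * c * ‖z - b‖ ^ k := by
  classical
  set R := Q.roots with hR
  set far := R.filter (fun w => ¬ ‖b - w‖ ≤ e) with hfar
  set nr := R.filter (fun w => ‖b - w‖ ≤ e) with hnr
  set k := Multiset.card nr with hk
  set c' := ((far.map (fun w => ‖b - w‖)).prod) with hc'
  set a := ‖Q.leadingCoeff‖ with ha
  have ha0 : 0 < a := norm_pos_iff.2 (Polynomial.leadingCoeff_ne_zero.2 hQne)
  have hc'0 : 0 < c' := by
    apply Multiset.prod_pos
    intro x hx
    obtain ⟨w, hw, rfl⟩ := Multiset.mem_map.1 hx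
    have := (Multiset.mem_filter.1 hw).2
    push_neg at this
    linarith
  have hk1 : 1 ≤ k := by
    rw [hk]
    rw [Nat.succ_le_iff]
    apply Multiset.card_pos_iff_exists_mem.2
    exact ⟨b, Multiset.mem_filter.2 ⟨hbR, by simpa using he⟩⟩
  have hkd : k ≤ d := le_trans (Multiset.card_le_card (Multiset.filter_le _ _)) hcardR
  refine ⟨k, a * c', hk1, hkd, mul_pos ha0 hc'0, ?_⟩
  intro z hz
  have hprod := prod_bound R b z e (hest z hz)
  rw [← hfar, ← hnr, ← hk, ← hc'] at hprod
  have hr0 : (0:ℝ) ≤ ‖z - b‖ ^ k := by positivity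
  have hN := hcardR
  have h32u : (32:ℝ) ^ Multiset.card R ≤ (32:ℝ) ^ d :=
    pow_le_pow_right₀ (by norm_num) hN
  have h32l : ((32:ℝ) ^ d)⁻¹ ≤ ((32:ℝ)⁻¹) ^ Multiset.card R := by
    rw [inv_pow]
    exact inv_anti₀ (by positivity) h32u
  have hallprod : (0:ℝ) ≤ (R.map (fun w => ‖z - w‖)).prod :=
    Multiset.prod_nonneg (by
      intro x hx; obtain ⟨y, hy, rfl⟩ := Multiset.mem_map.1 hx; exact norm_nonneg _)
  rw [abs_eval Q z, ← hR, ← ha]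
  constructor
  · calc ((32:ℝ) ^ d)⁻¹ * (a * c') * ‖z - b‖ ^ k
        = a * (((32:ℝ) ^ d)⁻¹ * (c' * ‖z - b‖ ^ k)) := by ring
      _ ≤ a * (((32:ℝ)⁻¹) ^ Multiset.card R * (c' * ‖z - b‖ ^ k)) := by
          apply mul_le_mul_of_nonneg_left _ ha0.le
          apply mul_le_mul_of_nonneg_right h32l (by positivity)
      _ ≤ a * (R.map (fun w => ‖z - w‖)).prod :=
          mul_le_mul_of_nonneg_left hprod.1 ha0.le
  · calc a * (R.map (fun w => ‖z - w‖)).prod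
        ≤ a * ((32:ℝ) ^ Multiset.card R * (c' * ‖z - b‖ ^ k)) :=
          mul_le_mul_of_nonneg_left hprod.2 ha0.le
      _ ≤ a * ((32:ℝ) ^ d * (c' * ‖z - b‖ ^ k)) := by
          apply mul_le_mul_of_nonneg_left _ ha0.le
          apply mul_le_mul_of_nonneg_right h32u (by positivity)
      _ = (32:ℝ) ^ d * (a * c') * ‖z - b‖ ^ k := by ring
end CPD

open CPD in
/-- the complex decomposition D1: for any nonconstant polynomial `Q` of degree at
most `d`, the plane is covered by boundedly many convex sets on each of which `|Q|` is
comparable to a constant multiple of a power of the distance to a single root of `Q`. -/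
theorem complex_polynomial_decomposition (d : ℕ) (hd : 1 ≤ d) (ε : ℝ)
    (hε : ε ∈ Set.Ioc (0 : ℝ) (Real.pi / 8)) (hεdiv : ∃ m : ℕ, (m : ℝ) * ε = 2 * Real.pi) :
    ∃ (M : ℕ) (C : ℝ), 1 ≤ C ∧
      ∀ Q : Polynomial ℂ, Q.natDegree ≤ d → 0 < Q.natDegree →
        ∃ B : Fin M → Set ℂ, (⋃ l, B l) = Set.univ ∧
          ∀ l : Fin M, Convex ℝ (B l) ∧
            ∃ (b : ℂ) (k : ℕ) (c : ℝ), Q.IsRoot b ∧ 1 ≤ k ∧ k ≤ d ∧ 0 < c ∧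
              ∀ z ∈ B l,
                C⁻¹ * c * ‖z - b‖ ^ k ≤ ‖Q.eval z‖ ∧
                  ‖Q.eval z‖ ≤ C * c * ‖z - b‖ ^ k := by
  classical
  obtain ⟨hε0, hε8⟩ := hε
  obtain ⟨m, hm⟩ := hεdiv
  refine ⟨d * (1 + d * m + d * m), (32:ℝ) ^ d, one_le_pow₀ (by norm_num), ?_⟩
  intro Q hQd hQ0
  have hQne : Q ≠ 0 := fun h => by simp [h] at hQ0
  set R := Q.roots with hRdef
  set F := R.toFinset with hFdef
  have hRF : ∀ w ∈ R, w ∈ F := fun w hw => Multiset.mem_toFinset.2 hw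
  have hcardR : Multiset.card R ≤ d := le_trans (Polynomial.card_roots' Q) hQd
  have hFd : F.card ≤ d := le_trans (Multiset.toFinset_card_le R) hcardR
  obtain ⟨b₀, hb₀⟩ := Complex.exists_root (Polynomial.natDegree_pos_iff_degree_pos.1 hQ0)
  have hb₀F : b₀ ∈ F := hRF b₀ ((Polynomial.mem_roots hQne).2 hb₀)
  -- the finite family of pieces
  set D : ℂ → Finset ℝ := fun b => F.image (fun w => ‖b - w‖) with hD
  set pieces : ℂ → Finset (Set ℂ) := fun b =>
    ({pieceA F b} ∪ (D b ×ˢ Finset.range m).image (fun p => pieceB F b ε p.1 p.2)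
      ∪ (D b ×ˢ Finset.range m).image (fun p => pieceC F b ε p.1 p.2)) with hpieces
  set S : Finset (Set ℂ) := F.biUnion pieces with hS
  -- cardinality bound
  have hScard : S.card ≤ d * (1 + d * m + d * m) := by
    have hpc : ∀ b, (pieces b).card ≤ 1 + d * m + d * m := by
      intro b
      have hDb : (D b).card ≤ d := le_trans (Finset.card_image_le) hFd
      have hBcard : ((D b ×ˢ Finset.range m).image (fun p => pieceB F b ε p.1 p.2)).card ≤ d * m := by
        refine le_trans (Finset.card_image_le) ?_
        rw [Finset.card_product, Finset.card_range]
        exact Nat.mul_le_mul_right m hDb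
      have hCcard : ((D b ×ˢ Finset.range m).image (fun p => pieceC F b ε p.1 p.2)).card ≤ d * m := by
        refine le_trans (Finset.card_image_le) ?_
        rw [Finset.card_product, Finset.card_range]
        exact Nat.mul_le_mul_right m hDb
      calc (pieces b).card
          ≤ ({pieceA F b} ∪ (D b ×ˢ Finset.range m).image (fun p => pieceB F b ε p.1 p.2)).card
            + ((D b ×ˢ Finset.range m).image (fun p => pieceC F b ε p.1 p.2)).card :=
            Finset.card_union_le _ _
        _ ≤ (({pieceA F b} : Finset (Set ℂ)).card
            + ((D b ×ˢ Finset.range m).image (fun p => pieceB F b ε p.1 p.2)).card)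
            + ((D b ×ˢ Finset.range m).image (fun p => pieceC F b ε p.1 p.2)).card := by
            exact Nat.add_le_add_right (Finset.card_union_le _ _) _
        _ ≤ 1 + d * m + d * m := by
            have : ({pieceA F b} : Finset (Set ℂ)).card = 1 := Finset.card_singleton _
            omega
    calc S.card ≤ ∑ b ∈ F, (pieces b).card := Finset.card_biUnion_le
      _ ≤ ∑ _b ∈ F, (1 + d * m + d * m) := Finset.sum_le_sum (fun b _ => hpc b)
      _ = F.card * (1 + d * m + d * m) := by rw [Finset.sum_const, smul_eq_mul]
      _ ≤ d * (1 + d * m + d * m) := Nat.mul_le_mul_right _ hFd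
  -- each piece has the required property
  have hall : ∀ s ∈ S, Convex ℝ s ∧
      ∃ (b : ℂ) (k : ℕ) (c : ℝ), Q.IsRoot b ∧ 1 ≤ k ∧ k ≤ d ∧ 0 < c ∧
        ∀ z ∈ s,
          ((32:ℝ) ^ d)⁻¹ * c * ‖z - b‖ ^ k ≤ ‖Q.eval z‖ ∧
            ‖Q.eval z‖ ≤ (32:ℝ) ^ d * c * ‖z - b‖ ^ k := by
    intro s hs
    obtain ⟨b, hbF, hsb⟩ := Finset.mem_biUnion.1 hs
    have hbR : b ∈ R := Multiset.mem_toFinset.1 hbF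
    have hbroot : Q.IsRoot b := (Polynomial.mem_roots hQne).1 hbR
    rcases Finset.mem_union.1 hsb with hs' | hsC
    · rcases Finset.mem_union.1 hs' with hsA | hsB
      · -- piece A
        have hseq : s = pieceA F b := Finset.mem_singleton.1 hsA
        subst hseq
        refine ⟨convex_pieceA F b, b, ?_⟩
        obtain ⟨k, c, h1, h2, h3, h4⟩ := piece_prop d Q hQne hcardR b hbR 0 le_rfl
          (pieceA F b) (fun z hz => pieceA_est F R hRF b z hz)
        exact ⟨k, c, hbroot, h1, h2, h3, h4⟩
      · -- piece B
        obtain ⟨p, hp, rfl⟩ := Finset.mem_image.1 hsB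
        have hpD : p.1 ∈ D b := (Finset.mem_product.1 hp).1
        have he0 : 0 ≤ p.1 := by
          obtain ⟨w, hw, hwe⟩ := Finset.mem_image.1 hpD
          rw [← hwe]; exact norm_nonneg _
        refine ⟨convex_pieceB F b ε p.1 p.2, b, ?_⟩
        obtain ⟨k, c, h1, h2, h3, h4⟩ := piece_prop d Q hQne hcardR b hbR p.1 he0
          (pieceB F b ε p.1 p.2) (fun z hz => pieceB_est F R hRF b z ε p.1 p.2 hz)
        exact ⟨k, c, hbroot, h1, h2, h3, h4⟩
    · -- piece C
      obtain ⟨p, hp, rfl⟩ := Finset.mem_image.1 hsC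
      have hpD : p.1 ∈ D b := (Finset.mem_product.1 hp).1
      have he0 : 0 ≤ p.1 := by
        obtain ⟨w, hw, hwe⟩ := Finset.mem_image.1 hpD
        rw [← hwe]; exact norm_nonneg _
      refine ⟨convex_pieceC F b ε p.1 p.2, b, ?_⟩
      obtain ⟨k, c, h1, h2, h3, h4⟩ := piece_prop d Q hQne hcardR b hbR p.1 he0
        (pieceC F b ε p.1 p.2) (fun z hz => pieceC_est F R hRF b z ε p.1 p.2 hz)
      exact ⟨k, c, hbroot, h1, h2, h3, h4⟩
  -- the pieces cover the plane
  have hcov : ∀ z : ℂ, ∃ s ∈ S, z ∈ s := by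
    intro z
    obtain ⟨b, hbF, hmin⟩ := Finset.exists_min_image F (fun w => dist z w) ⟨b₀, hb₀F⟩
    have hvor : z ∈ vor F b := fun w hw => hmin w hw
    by_cases hA : ∀ w ∈ F, (0:ℝ) < ‖b - w‖ → dist z b ≤ ‖b - w‖ / 2
    · refine ⟨pieceA F b, ?_, hA⟩
      exact Finset.mem_biUnion.2 ⟨b, hbF, Finset.mem_union_left _ (Finset.mem_union_left _
        (Finset.mem_singleton_self _))⟩
    · push_neg at hA
      obtain ⟨w₀, hw₀F, hw₀pos, hw₀⟩ := hA
      have hzb : z ≠ b := by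
        intro h
        rw [h, dist_self] at hw₀
        linarith
      obtain ⟨t, htm, hs1, hs2, hs3⟩ := sector_cover ε hε0 hε8 m hm (z - b) (sub_ne_zero.2 hzb)
      have hdistr : dist z b = ‖z - b‖ := Complex.dist_eq z b
      set r := ‖z - b‖ with hr
      have hw₀r : ‖b - w₀‖ < 2 * r := by rw [← hdistr]; linarith
      set E := (D b).filter (fun x => x < 2 * r) with hE
      have hEne : E.Nonempty :=
        ⟨‖b - w₀‖, Finset.mem_filter.2
          ⟨Finset.mem_image.2 ⟨w₀, hw₀F, rfl⟩, hw₀r⟩⟩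
      set e := E.max' hEne with he
      have heE := E.max'_mem hEne
      have heD : e ∈ D b := (Finset.mem_filter.1 heE).1
      have her : e < 2 * r := (Finset.mem_filter.1 heE).2
      have hemax : ∀ x ∈ E, x ≤ e := fun x hx => E.le_max' x hx
      have hsector : z ∈ sector b ε t := ⟨hs1, hs2⟩
      by_cases hBC : r ≤ 2 * e
      · refine ⟨pieceB F b ε e t, ?_, ⟨⟨hvor, ?_⟩, hsector⟩, ?_⟩
        · exact Finset.mem_biUnion.2 ⟨b, hbF, Finset.mem_union_left _ (Finset.mem_union_right _
            (Finset.mem_image.2 ⟨(e, t), Finset.mem_product.2 ⟨heD, Finset.mem_range.2 htm⟩, rfl⟩))⟩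
        · rw [Metric.mem_closedBall, hdistr]; exact hBC
        · show e / 4 ≤ (dir ((t:ℝ) * ε + ε / 2) * (z - b)).re
          linarith
      · push_neg at hBC
        refine ⟨pieceC F b ε e t, ?_, ⟨⟨hvor, ?_⟩, hsector⟩, ?_⟩
        · exact Finset.mem_biUnion.2 ⟨b, hbF, Finset.mem_union_right _
            (Finset.mem_image.2 ⟨(e, t), Finset.mem_product.2 ⟨heD, Finset.mem_range.2 htm⟩, rfl⟩)⟩
        · intro w hw hfw
          have h2r : 2 * r ≤ ‖b - w‖ := by
            by_contra hcon
            push_neg at hcon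
            have : ‖b - w‖ ∈ E := Finset.mem_filter.2
              ⟨Finset.mem_image.2 ⟨w, hw, rfl⟩, hcon⟩
            exact absurd (hemax _ this) (not_le.2 hfw)
          rw [hdistr]
          linarith
        · show e ≤ (dir ((t:ℝ) * ε + ε / 2) * (z - b)).re
          linarith
  -- assemble via padding
  obtain ⟨B, hBcov, hBprop⟩ := pad
    (fun s => Convex ℝ s ∧
      ∃ (b : ℂ) (k : ℕ) (c : ℝ), Q.IsRoot b ∧ 1 ≤ k ∧ k ≤ d ∧ 0 < c ∧
        ∀ z ∈ s,
          ((32:ℝ) ^ d)⁻¹ * c * ‖z - b‖ ^ k ≤ ‖Q.eval z‖ ∧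
            ‖Q.eval z‖ ≤ (32:ℝ) ^ d * c * ‖z - b‖ ^ k)
    S hScard hcov hall
    ⟨convex_empty, b₀, 1, 1, hb₀, le_rfl, hd, one_pos,
      fun z hz => absurd hz (Set.notMem_empty z)⟩
  exact ⟨B, hBcov, fun l => ⟨(hBprop l).1, (hBprop l).2⟩⟩

end
end
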